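/- For any Dyck path x ∈ D_{2k}^0 with zero flaws, f^k(x) is the mirror image of x at the line y=0, i.e., f^k(x) is obtained from x by exchanging every U-step with a D-step and vice versa. -/

import Mathlib

/-- Value of a step: `true` = U-step (+1), `false` = D-step (-1). -/
def stepVal (b : Bool) : ℤ := if b then 1 else -1

/-- Height of the lattice path `x` after its first `i` steps. -/
def pathHeight (x : List Bool) (i : ℕ) : ℤ := ((x.take i).map stepVal).sum

/-- The step at position `i` (0-indexed) is a U-step. -/
def isU (x : List Bool) (i : ℕ) : Bool := x.getD i true

/-- The step at position `i` (0-indexed) is a D-step. -/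
def isD (x : List Bool) (i : ℕ) : Bool := !(x.getD i true)

/-- Number of flaws: D-steps lying below the line y=0 (i.e. starting at height ≤ 0). -/
def flaws (x : List Bool) : ℕ :=
  ((List.range x.length).filter (fun i => isD x i && decide (pathHeight x i ≤ 0))).length

/-- `DyckSet k e` = the set `D_{2k}^e` of Dyck paths with `2k` steps and `e` flaws. -/
def DyckSet (k e : ℕ) : Set (List Bool) :=
  {x | x.length = 2*k ∧ x.count true = k ∧ flaws x = e}

/-- `LSet k m` = the set `L_{2k,m}` of lattice paths with `2k` steps and `m` U-steps. -/
def LSet (k m : ℕ) : Set (List Bool) :=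
  {x | x.length = 2*k ∧ x.count true = m}

/-- `d_c(x)`: number of D-steps of `x` starting on the line `y = c`. -/
def dstart (x : List Bool) (c : ℤ) : ℕ :=
  ((List.range x.length).filter (fun i => isD x i && decide (pathHeight x i = c))).length

/-- `u_c(x)`: number of U-steps of `x` starting on the line `y = c`. -/
def ustart (x : List Bool) (c : ℤ) : ℕ :=
  ((List.range x.length).filter (fun i => isU x i && decide (pathHeight x i = c))).length

/-- Positions (in increasing order) of D-steps of `x` touching the line `y = c`
(a D-step at position `i` goes from height `pathHeight x i` down to `pathHeight x i - 1`,
so it touches `y = c` iff its start height is `c` or `c+1`). -/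
def dtouch (x : List Bool) (c : ℤ) : List ℕ :=
  (List.range x.length).filter
    (fun i => isD x i && (decide (pathHeight x i = c) || decide (pathHeight x i = c+1)))

/-- Positions (in increasing order) of U-steps of `x` touching the line `y = c`
(a U-step at position `i` goes from height `pathHeight x i` up to `pathHeight x i + 1`,
so it touches `y = c` iff its start height is `c` or `c-1`). -/
def utouch (x : List Bool) (c : ℤ) : List ℕ :=
  (List.range x.length).filter
    (fun i => isU x i && (decide (pathHeight x i = c) || decide (pathHeight x i = c-1)))

/-- Position (0-indexed) flipped by `g`: the `(d_0(x)+1)`-th D-step touching `y=0`. -/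
def gIdx (x : List Bool) : ℕ := (dtouch x 0).getD (dstart x 0) 0

/-- The map `g`: flip the `(d_0(x)+1)`-th D-step of `x` touching the line `y=0`. -/
def gMap (x : List Bool) : List Bool := x.set (gIdx x) true

/-- Position (0-indexed) flipped by `h`: the `u_1(x)`-th U-step touching `y=1`. -/
def hIdx (x : List Bool) : ℕ := (utouch x 1).getD (ustart x 1 - 1) 0

/-- The map `h`: flip the `u_1(x)`-th U-step of `x` touching the line `y=1`. -/
def hMap (x : List Bool) : List Bool := x.set (hIdx x) false

/-- Position (0-indexed) flipped by `g'`: the `d_0(x)`-th D-step touching `y=0`. -/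
def g'Idx (x : List Bool) : ℕ := (dtouch x 0).getD (dstart x 0 - 1) 0

/-- The map `g'`: flip the `d_0(x)`-th D-step of `x` touching the line `y=0`. -/
def g'Map (x : List Bool) : List Bool := x.set (g'Idx x) true

/-- Position (0-indexed) flipped by `h'`: the `(u_1(x)+1)`-th U-step touching `y=1`. -/
def h'Idx (x : List Bool) : ℕ := (utouch x 1).getD (ustart x 1) 0

/-- The map `h'`: flip the `(u_1(x)+1)`-th U-step of `x` touching the line `y=1`. -/
def h'Map (x : List Bool) : List Bool := x.set (h'Idx x) false

/-- The minimum-change map `f := h ∘ g`. -/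
def fMap (x : List Bool) : List Bool := hMap (gMap x)

/-- `piSeq n x`: the sequence of (1-indexed) positions flipped by the successive
applications `g, h, g, h, ...` over `n` applications of `f` starting from `x`. -/
def piSeq : ℕ → List Bool → List ℕ
  | 0, _ => []
  | n+1, x => (gIdx x + 1) :: (hIdx (gMap x) + 1) :: piSeq n (fMap x)

/-- Reverse the step sequence and complement every step. -/
def revComp (x : List Bool) : List Bool := x.reverse.map (fun b => !b)


-- ===== infrastructure =====
namespace CF

def tot (x : List Bool) : ℤ := (x.map stepVal).sum

lemma pathHeight_eq (x : List Bool) (i : ℕ) : pathHeight x i = tot (x.take i) := rfl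

lemma tot_append (u v : List Bool) : tot (u ++ v) = tot u + tot v := by
  simp [tot]

lemma tot_cons (b : Bool) (l : List Bool) : tot (b :: l) = stepVal b + tot l := by
  simp [tot]

lemma tot_comp (x : List Bool) : tot (x.map (fun b => !b)) = - tot x := by
  induction x with
  | nil => simp [tot]
  | cons b l ih => cases b <;> simp [tot_cons, ih, stepVal] <;> ring

lemma pathHeight_zero (x : List Bool) : pathHeight x 0 = 0 := rfl

lemma pathHeight_cons (b : Bool) (l : List Bool) (i : ℕ) :
    pathHeight (b :: l) (i+1) = stepVal b + pathHeight l i := by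
  simp [pathHeight_eq, List.take_succ_cons, tot_cons]

lemma pathHeight_of_le (x : List Bool) {i : ℕ} (h : x.length ≤ i) :
    pathHeight x i = tot x := by
  simp [pathHeight_eq, List.take_of_length_le h]

lemma pathHeight_append_left (u v : List Bool) {i : ℕ} (h : i ≤ u.length) :
    pathHeight (u ++ v) i = pathHeight u i := by
  simp [pathHeight_eq, List.take_append_of_le_length h]

lemma pathHeight_append_right (u v : List Bool) {i : ℕ} (h : u.length ≤ i) :
    pathHeight (u ++ v) i = tot u + pathHeight v (i - u.length) := by
  have h2 : i = u.length + (i - u.length) := by omega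
  rw [pathHeight_eq, h2, List.take_append, tot_append]
  have h3 : u.length + (i - u.length) - u.length = i - u.length := by omega
  rw [h3, List.take_of_length_le (by omega)]; rfl

lemma pathHeight_succ (x : List Bool) {i : ℕ} (h : i < x.length) :
    pathHeight x (i+1) = pathHeight x i + stepVal (x.getD i true) := by
  have h1 : x.take (i+1) = x.take i ++ [x[i]] := by
    rw [List.take_succ]
    simp [List.getElem?_eq_getElem h]
  rw [pathHeight_eq, h1, tot_append, pathHeight_eq, List.getD_eq_getElem x true h]
  simp [tot]

/-- generic index lists -/
def idxs (p : Bool → ℤ → Bool) (x : List Bool) : List ℕ :=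
  (List.range x.length).filter (fun i => p (x.getD i true) (pathHeight x i))

lemma dtouch_eq (x : List Bool) (c : ℤ) :
    dtouch x c = idxs (fun b h => !b && (decide (h = c) || decide (h = c+1))) x := rfl
lemma utouch_eq (x : List Bool) (c : ℤ) :
    utouch x c = idxs (fun b h => b && (decide (h = c) || decide (h = c-1))) x := rfl
lemma dstart_eq (x : List Bool) (c : ℤ) :
    dstart x c = (idxs (fun b h => !b && decide (h = c)) x).length := rfl
lemma ustart_eq (x : List Bool) (c : ℤ) :
    ustart x c = (idxs (fun b h => b && decide (h = c)) x).length := rfl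

lemma idxs_congr {p q : Bool → ℤ → Bool} (h : ∀ b h', p b h' = q b h') (x : List Bool) :
    idxs p x = idxs q x := by
  unfold idxs
  exact List.filter_congr (fun i _ => by rw [h])

lemma idxs_append (p : Bool → ℤ → Bool) (u v : List Bool) :
    idxs p (u ++ v) = idxs p u ++ (idxs (fun b h => p b (tot u + h)) v).map (u.length + ·) := by
  unfold idxs
  rw [List.length_append, List.range_add, List.filter_append, List.filter_map]
  congr 1
  · apply List.filter_congr
    intro i hi
    rw [List.mem_range] at hi
    rw [List.getD_append _ _ _ _ hi, pathHeight_append_left _ _ (le_of_lt hi)]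
  · congr 1
    apply List.filter_congr
    intro i hi
    rw [List.mem_range] at hi
    simp only [Function.comp_apply]
    rw [List.getD_append_right _ _ _ _ (by omega), pathHeight_append_right _ _ (by omega)]
    have h4 : u.length + i - u.length = i := by omega
    rw [h4]

lemma idxs_nil (p : Bool → ℤ → Bool) : idxs p [] = [] := rfl

lemma idxs_cons (p : Bool → ℤ → Bool) (b : Bool) (l : List Bool) :
    idxs p (b :: l) = (if p b 0 then [0] else []) ++ (idxs (fun b' h => p b' (stepVal b + h)) l).map (1 + ·) := by
  have : (b :: l) = [b] ++ l := rfl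
  rw [this, idxs_append]
  congr 1
  · unfold idxs
    have hr : List.range [b].length = [0] := rfl
    rw [hr, List.filter_cons, List.filter_nil]
    by_cases hp : p b 0
    · simp only [List.getD]
      simp [pathHeight_zero, hp]
    · simp only [List.getD]
      simp [pathHeight_zero, hp]
  · congr 2
    simp [tot, stepVal]

-- ===== derived append/cons lemmas =====

lemma dtouch_append (u v : List Bool) (c : ℤ) :
    dtouch (u ++ v) c = dtouch u c ++ (dtouch v (c - tot u)).map (u.length + ·) := by
  rw [dtouch_eq, idxs_append, ← dtouch_eq]
  congr 2
  rw [dtouch_eq]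
  apply idxs_congr
  intro b h
  congr 1
  rw [Bool.eq_iff_iff]
  simp only [Bool.or_eq_true, decide_eq_true_eq]
  constructor <;> (intro hh; omega)

lemma utouch_append (u v : List Bool) (c : ℤ) :
    utouch (u ++ v) c = utouch u c ++ (utouch v (c - tot u)).map (u.length + ·) := by
  rw [utouch_eq, idxs_append, ← utouch_eq]
  congr 2
  rw [utouch_eq]
  apply idxs_congr
  intro b h
  congr 1
  rw [Bool.eq_iff_iff]
  simp only [Bool.or_eq_true, decide_eq_true_eq]
  constructor <;> (intro hh; omega)

lemma dstart_append (u v : List Bool) (c : ℤ) :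
    dstart (u ++ v) c = dstart u c + dstart v (c - tot u) := by
  rw [dstart_eq, idxs_append, List.length_append, List.length_map, ← dstart_eq]
  congr 1
  rw [dstart_eq]
  congr 1
  apply idxs_congr
  intro b h
  congr 1
  rw [Bool.eq_iff_iff]
  simp only [decide_eq_true_eq]
  omega

lemma ustart_append (u v : List Bool) (c : ℤ) :
    ustart (u ++ v) c = ustart u c + ustart v (c - tot u) := by
  rw [ustart_eq, idxs_append, List.length_append, List.length_map, ← ustart_eq]
  congr 1
  rw [ustart_eq]
  congr 1
  apply idxs_congr
  intro b h
  congr 1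
  rw [Bool.eq_iff_iff]
  simp only [decide_eq_true_eq]
  omega

lemma idxs_cons' (p : Bool → ℤ → Bool) (b : Bool) (l : List Bool) :
    idxs p (b :: l) = (if p b 0 then [0] else []) ++ (idxs (fun b' h => p b' (stepVal b + h)) l).map (1 + ·) :=
  idxs_cons p b l

lemma dtouch_cons_true (l : List Bool) (c : ℤ) :
    dtouch (true :: l) c = (dtouch l (c - 1)).map (1 + ·) := by
  rw [dtouch_eq, idxs_cons']
  simp only [Bool.not_true, Bool.false_and, Bool.false_eq_true, if_false, List.nil_append]
  congr 1
  rw [dtouch_eq]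
  apply idxs_congr
  intro b h
  congr 1
  rw [Bool.eq_iff_iff]
  simp only [Bool.or_eq_true, decide_eq_true_eq, stepVal]
  constructor <;> (intro hh; simp at hh ⊢; omega)

lemma dtouch_cons_false (l : List Bool) (c : ℤ) :
    dtouch (false :: l) c = (if c = 0 ∨ c = -1 then [0] else []) ++ (dtouch l (c + 1)).map (1 + ·) := by
  rw [dtouch_eq, idxs_cons']
  congr 1
  · by_cases hc : c = 0 ∨ c = -1
    · rw [if_pos hc, if_pos]
      simp only [Bool.not_false, Bool.true_and, Bool.or_eq_true, decide_eq_true_eq]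
      omega
    · rw [if_neg hc, if_neg]
      simp only [Bool.not_false, Bool.true_and, Bool.or_eq_true, decide_eq_true_eq]
      omega
  · congr 1
    rw [dtouch_eq]
    apply idxs_congr
    intro b h
    congr 1
    rw [Bool.eq_iff_iff]
    simp only [Bool.or_eq_true, decide_eq_true_eq, stepVal]
    constructor <;> (intro hh; simp at hh ⊢; omega)

lemma utouch_cons_true (l : List Bool) (c : ℤ) :
    utouch (true :: l) c = (if c = 0 ∨ c = 1 then [0] else []) ++ (utouch l (c - 1)).map (1 + ·) := by
  rw [utouch_eq, idxs_cons']
  congr 1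
  · by_cases hc : c = 0 ∨ c = 1
    · rw [if_pos hc, if_pos]
      simp only [Bool.true_and, Bool.or_eq_true, decide_eq_true_eq]
      omega
    · rw [if_neg hc, if_neg]
      simp only [Bool.true_and, Bool.or_eq_true, decide_eq_true_eq]
      omega
  · congr 1
    rw [utouch_eq]
    apply idxs_congr
    intro b h
    congr 1
    rw [Bool.eq_iff_iff]
    simp only [Bool.or_eq_true, decide_eq_true_eq, stepVal]
    constructor <;> (intro hh; simp at hh ⊢; omega)

lemma utouch_cons_false (l : List Bool) (c : ℤ) :
    utouch (false :: l) c = (utouch l (c + 1)).map (1 + ·) := by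
  rw [utouch_eq, idxs_cons']
  simp only [Bool.false_and, Bool.false_eq_true, if_false, List.nil_append]
  congr 1
  rw [utouch_eq]
  apply idxs_congr
  intro b h
  congr 1
  rw [Bool.eq_iff_iff]
  simp only [Bool.or_eq_true, decide_eq_true_eq, stepVal]
  constructor <;> (intro hh; simp at hh ⊢; omega)

lemma dstart_cons_true (l : List Bool) (c : ℤ) : dstart (true :: l) c = dstart l (c - 1) := by
  have : (true :: l) = [true] ++ l := rfl
  rw [this, dstart_append]
  have h1 : dstart [true] c = 0 := by
    rw [dstart_eq]
    have hr : List.range [true].length = [0] := rfl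
    unfold idxs
    rw [hr, List.filter_cons, List.filter_nil]
    simp [List.getD]
  rw [h1]
  have : tot [true] = 1 := by simp [tot, stepVal]
  rw [this]
  omega

lemma dstart_cons_false (l : List Bool) (c : ℤ) :
    dstart (false :: l) c = (if c = 0 then 1 else 0) + dstart l (c + 1) := by
  have : (false :: l) = [false] ++ l := rfl
  rw [this, dstart_append]
  have h1 : dstart [false] c = if c = 0 then 1 else 0 := by
    rw [dstart_eq]
    have hr : List.range [false].length = [0] := rfl
    unfold idxs
    rw [hr, List.filter_cons, List.filter_nil]
    by_cases hc : c = 0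
    · subst hc; simp [List.getD, pathHeight_zero]
    · rw [if_neg hc]
      have hd : (decide ((0:ℤ) = c)) = false := decide_eq_false (by omega)
      simp [List.getD, pathHeight_zero, hd]
      exact hd
  rw [h1]
  have : tot [false] = -1 := by simp [tot, stepVal]
  rw [this]
  have h2 : c - (-1) = c + 1 := by ring
  rw [h2]

lemma ustart_cons_true (l : List Bool) (c : ℤ) :
    ustart (true :: l) c = (if c = 0 then 1 else 0) + ustart l (c - 1) := by
  have : (true :: l) = [true] ++ l := rfl
  rw [this, ustart_append]
  have h1 : ustart [true] c = if c = 0 then 1 else 0 := by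
    rw [ustart_eq]
    have hr : List.range [true].length = [0] := rfl
    unfold idxs
    rw [hr, List.filter_cons, List.filter_nil]
    by_cases hc : c = 0
    · subst hc; simp [List.getD, pathHeight_zero]
    · rw [if_neg hc]
      have hd : (decide ((0:ℤ) = c)) = false := decide_eq_false (by omega)
      simp [List.getD, pathHeight_zero, hd]
      exact hd
  rw [h1]
  have : tot [true] = 1 := by simp [tot, stepVal]
  rw [this]

lemma ustart_cons_false (l : List Bool) (c : ℤ) : ustart (false :: l) c = ustart l (c + 1) := by
  have : (false :: l) = [false] ++ l := rfl
  rw [this, ustart_append]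
  have h1 : ustart [false] c = 0 := by
    rw [ustart_eq]
    have hr : List.range [false].length = [0] := rfl
    unfold idxs
    rw [hr, List.filter_cons, List.filter_nil]
    simp [List.getD]
  rw [h1]
  have : tot [false] = -1 := by simp [tot, stepVal]
  rw [this]
  have h2 : c - (-1) = c + 1 := by ring
  rw [h2]
  omega

-- ===== complement lemmas =====

lemma pathHeight_comp (x : List Bool) (i : ℕ) :
    pathHeight (x.map (fun b => !b)) i = - pathHeight x i := by
  rw [pathHeight_eq, pathHeight_eq, ← List.map_take, tot_comp]

lemma getD_comp (x : List Bool) {i : ℕ} (h : i < x.length) :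
    (x.map (fun b => !b)).getD i true = !(x.getD i true) := by
  rw [List.getD_eq_getElem _ _ (by simpa using h), List.getD_eq_getElem _ _ h]
  simp

lemma comp_idxs (p : Bool → ℤ → Bool) (x : List Bool) :
    idxs p (x.map (fun b => !b)) = idxs (fun b h => p (!b) (-h)) x := by
  unfold idxs
  rw [List.length_map]
  apply List.filter_congr
  intro i hi
  rw [List.mem_range] at hi
  rw [getD_comp x hi, pathHeight_comp]

lemma comp_dtouch (x : List Bool) (c : ℤ) :
    dtouch (x.map (fun b => !b)) c = utouch x (-c) := by
  rw [dtouch_eq, comp_idxs, utouch_eq]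
  apply idxs_congr
  intro b h
  have e1 : decide (-h = c) = decide (h = -c) := by rw [decide_eq_decide]; omega
  have e2 : decide (-h = c+1) = decide (h = -c-1) := by rw [decide_eq_decide]; omega
  simp only [Bool.not_not]
  rw [e1, e2]

lemma comp_utouch (x : List Bool) (c : ℤ) :
    utouch (x.map (fun b => !b)) c = dtouch x (-c) := by
  rw [utouch_eq, comp_idxs, dtouch_eq]
  apply idxs_congr
  intro b h
  have e1 : decide (-h = c) = decide (h = -c) := by rw [decide_eq_decide]; omega
  have e2 : decide (-h = c-1) = decide (h = -c+1) := by rw [decide_eq_decide]; omega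
  rw [e1, e2]

lemma comp_dstart (x : List Bool) (c : ℤ) :
    dstart (x.map (fun b => !b)) c = ustart x (-c) := by
  rw [dstart_eq, comp_idxs, ustart_eq]
  congr 1
  apply idxs_congr
  intro b h
  have e1 : decide (-h = c) = decide (h = -c) := by rw [decide_eq_decide]; omega
  simp only [Bool.not_not]
  rw [e1]

lemma comp_ustart (x : List Bool) (c : ℤ) :
    ustart (x.map (fun b => !b)) c = dstart x (-c) := by
  rw [ustart_eq, comp_idxs, dstart_eq]
  congr 1
  apply idxs_congr
  intro b h
  have e1 : decide (-h = c) = decide (h = -c) := by rw [decide_eq_decide]; omega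
  rw [e1]

-- ===== nonneg lemmas =====

def Nonneg (x : List Bool) : Prop := ∀ i, 0 ≤ pathHeight x i

lemma nonneg_one_le {x : List Bool} (hx : Nonneg x) {i : ℕ} (h : i < x.length)
    (hd : x.getD i true = false) : 1 ≤ pathHeight x i := by
  have h1 := hx (i+1)
  rw [pathHeight_succ x h, hd] at h1
  simp [stepVal] at h1
  omega

lemma nonneg_dtouch_nil {x : List Bool} (hx : Nonneg x) {c : ℤ} (hc : c ≤ -1) :
    dtouch x c = [] := by
  rw [dtouch_eq]
  unfold idxs
  rw [List.filter_eq_nil_iff]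
  intro i hi
  rw [List.mem_range] at hi
  simp only [Bool.and_eq_true, Bool.not_eq_true', Bool.or_eq_true, decide_eq_true_eq, not_and]
  intro hd
  have := nonneg_one_le hx hi hd
  omega

lemma nonneg_utouch_nil {x : List Bool} (hx : Nonneg x) {c : ℤ} (hc : c ≤ -1) :
    utouch x c = [] := by
  rw [utouch_eq]
  unfold idxs
  rw [List.filter_eq_nil_iff]
  intro i hi
  rw [List.mem_range] at hi
  simp only [Bool.and_eq_true, Bool.or_eq_true, decide_eq_true_eq, not_and]
  intro _
  have := hx i
  omega

lemma nonneg_dstart_zero {x : List Bool} (hx : Nonneg x) {c : ℤ} (hc : c ≤ 0) :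
    dstart x c = 0 := by
  rw [dstart_eq]
  unfold idxs
  rw [List.length_eq_zero_iff, List.filter_eq_nil_iff]
  intro i hi
  rw [List.mem_range] at hi
  simp only [Bool.and_eq_true, Bool.not_eq_true', decide_eq_true_eq, not_and]
  intro hd
  have := nonneg_one_le hx hi hd
  omega

lemma nonneg_ustart_neg {x : List Bool} (hx : Nonneg x) {c : ℤ} (hc : c ≤ -1) :
    ustart x c = 0 := by
  rw [ustart_eq]
  unfold idxs
  rw [List.length_eq_zero_iff, List.filter_eq_nil_iff]
  intro i hi
  simp only [Bool.and_eq_true, decide_eq_true_eq, not_and]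
  intro _
  have := hx i
  omega

-- ===== split lemmas =====

lemma filter_or_length {l : List ℕ} {p q : ℕ → Bool} (hdisj : ∀ a, ¬(p a = true ∧ q a = true)) :
    (l.filter (fun a => p a || q a)).length = (l.filter p).length + (l.filter q).length := by
  induction l with
  | nil => simp
  | cons a l ih =>
    simp only [List.filter_cons]
    cases hp : p a <;> cases hq : q a
    · simp [hp, hq, ih]
    · simp [hp, hq, ih]
      omega
    · simp [hp, hq, ih]
      omega
    · exact absurd ⟨hp, hq⟩ (hdisj a)

lemma utouch_length (x : List Bool) (c : ℤ) :
    (utouch x c).length = ustart x c + ustart x (c - 1) := by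
  unfold utouch
  rw [ustart_eq, ustart_eq]
  unfold idxs
  have : ∀ i, (isU x i && (decide (pathHeight x i = c) || decide (pathHeight x i = c - 1)))
      = ((isU x i && decide (pathHeight x i = c)) || (isU x i && decide (pathHeight x i = c - 1))) := by
    intro i
    cases h : isU x i <;> simp
  rw [List.filter_congr (fun i _ => this i)]
  apply filter_or_length
  intro a
  simp only [Bool.and_eq_true, decide_eq_true_eq]
  rintro ⟨⟨_, h1⟩, ⟨_, h2⟩⟩
  omega

lemma dtouch_length (x : List Bool) (c : ℤ) :
    (dtouch x c).length = dstart x c + dstart x (c + 1) := by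
  unfold dtouch
  rw [dstart_eq, dstart_eq]
  unfold idxs
  have : ∀ i, (isD x i && (decide (pathHeight x i = c) || decide (pathHeight x i = c + 1)))
      = ((isD x i && decide (pathHeight x i = c)) || (isD x i && decide (pathHeight x i = c + 1))) := by
    intro i
    cases h : isD x i <;> simp
  rw [List.filter_congr (fun i _ => this i)]
  apply filter_or_length
  intro a
  simp only [Bool.and_eq_true, decide_eq_true_eq]
  rintro ⟨⟨_, h1⟩, ⟨_, h2⟩⟩
  omega

lemma mem_dtouch_lt {x : List Bool} {c : ℤ} {i : ℕ} (h : i ∈ dtouch x c) : i < x.length := by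
  unfold dtouch at h
  rw [List.mem_filter, List.mem_range] at h
  exact h.1

lemma mem_utouch_lt {x : List Bool} {c : ℤ} {i : ℕ} (h : i ∈ utouch x c) : i < x.length := by
  unfold utouch at h
  rw [List.mem_filter, List.mem_range] at h
  exact h.1

lemma getD_mem {l : List ℕ} {n : ℕ} (h : n < l.length) : l.getD n 0 ∈ l := by
  rw [List.getD_eq_getElem _ _ h]
  exact List.getElem_mem h

lemma getD_map_add {l : List ℕ} {n : ℕ} (a : ℕ) (h : n < l.length) :
    (l.map (a + ·)).getD n 0 = a + l.getD n 0 := by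
  rw [List.getD_eq_getElem _ _ (by simpa using h), List.getD_eq_getElem _ _ h]
  simp

-- ===== Dyck trees and the orbit grammar =====

inductive Dk where
  | nil : Dk
  | node : Dk → Dk → Dk

def toPath : Dk → List Bool
  | .nil => []
  | .node a b => true :: (toPath a ++ false :: toPath b)

def sz : Dk → ℕ
  | .nil => 0
  | .node a b => sz a + sz b + 1

mutual
def stD : Dk → ℕ → List Bool
  | .nil, _ => []
  | .node a b, e =>
    if e = 0 then true :: (toPath a ++ false :: toPath b)
    else if e ≤ sz a then
      true :: ((gstD a (sz a - e)).map (fun b => !b) ++ true :: toPath b)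
    else
      false :: ((toPath a).map (fun b => !b) ++ true :: stD b (e - sz a - 1))
def gstD : Dk → ℕ → List Bool
  | .nil, _ => []
  | .node a b, e =>
    if e ≤ sz a then
      true :: ((stD a (sz a - e)).map (fun b => !b) ++ true :: toPath b)
    else
      false :: ((toPath a).map (fun b => !b) ++ true :: gstD b (e - sz a - 1))
end

lemma toPath_length (d : Dk) : (toPath d).length = 2 * sz d := by
  induction d with
  | nil => rfl
  | node a b iha ihb => simp [toPath, sz, iha, ihb]; omega

lemma toPath_tot (d : Dk) : tot (toPath d) = 0 := by
  induction d with
  | nil => rfl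
  | node a b iha ihb =>
    simp [toPath, tot_cons, tot_append, iha, ihb, stepVal]

lemma toPath_nonneg (d : Dk) : Nonneg (toPath d) := by
  induction d with
  | nil => intro i; simp [pathHeight_eq, tot, toPath]
  | node a b iha ihb =>
    intro i
    cases i with
    | zero => simp [pathHeight_zero]
    | succ j =>
      rw [toPath, pathHeight_cons]
      rcases le_or_gt j (toPath a).length with hj | hj
      · rw [pathHeight_append_left _ _ hj]
        have := iha j
        simp [stepVal]
        omega
      · rw [pathHeight_append_right _ _ (le_of_lt hj), toPath_tot]
        rcases Nat.exists_eq_add_of_lt hj with ⟨j', rfl⟩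
        have hj2 : (toPath a).length + j' + 1 - (toPath a).length = j' + 1 := by omega
        rw [hj2, pathHeight_cons]
        have := ihb j'
        simp [stepVal]
        omega

lemma stD_length (d : Dk) (e : ℕ) : (stD d e).length = 2 * sz d ∧ (gstD d e).length = 2 * sz d := by
  induction d generalizing e with
  | nil => exact ⟨rfl, rfl⟩
  | node a b iha ihb =>
    constructor
    · rw [stD]
      split
      · rw [← toPath]; exact toPath_length _
      · split
        · simp [toPath_length, (iha _).2, sz]; omega
        · simp [toPath_length, (ihb _).1, sz]; omega
    · rw [gstD]
      split
      · simp [toPath_length, (iha _).1, sz]; omega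
      · simp [toPath_length, (ihb _).2, sz]; omega

lemma stD_zero (d : Dk) : stD d 0 = toPath d := by
  cases d with
  | nil => rfl
  | node a b => rw [stD, if_pos rfl, toPath]

lemma comp_toPath_node (a b : Dk) :
    (toPath (Dk.node a b)).map (fun b => !b)
      = false :: ((toPath a).map (fun b => !b) ++ true :: (toPath b).map (fun b => !b)) := by
  simp [toPath]

lemma stD_last (d : Dk) : stD d (sz d) = (toPath d).map (fun b => !b) := by
  induction d with
  | nil => rfl
  | node a b iha ihb =>
    rw [stD, if_neg (by simp [sz]), if_neg (by simp [sz]), comp_toPath_node]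
    have : sz (Dk.node a b) - sz a - 1 = sz b := by simp [sz]; omega
    rw [this, ihb]

lemma stD_tot (d : Dk) (e : ℕ) :
    (e ≤ sz d → tot (stD d e) = 0) ∧ (e < sz d → tot (gstD d e) = 2) := by
  induction d generalizing e with
  | nil => exact ⟨fun _ => rfl, fun h => absurd h (by simp [sz])⟩
  | node a b iha ihb =>
    constructor
    · intro he
      rw [stD]
      split
      · rw [← toPath, toPath_tot]
      · split
        · rename_i h0 hle
          rw [tot_cons, tot_append, tot_comp, tot_cons, toPath_tot]
          have := (iha (sz a - e)).2 (by omega)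
          simp [stepVal, this]
        · rename_i h0 hle
          rw [tot_cons, tot_append, tot_comp, tot_cons, toPath_tot]
          have := (ihb (e - sz a - 1)).1 (by simp [sz] at he ⊢; omega)
          simp [stepVal, this]
    · intro he
      rw [gstD]
      split
      · rename_i hle
        rw [tot_cons, tot_append, tot_comp, tot_cons, toPath_tot]
        have := (iha (sz a - e)).1 (by omega)
        simp [stepVal, this]
      · rename_i hle
        rw [tot_cons, tot_append, tot_comp, tot_cons, toPath_tot]
        have := (ihb (e - sz a - 1)).2 (by simp [sz] at he ⊢; omega)
        simp [stepVal, this]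

-- ===== shape lemmas =====

lemma tot_comp' {W : List Bool} {c : ℤ} (h : tot W = c) : tot (W.map (fun b => !b)) = -c := by
  rw [tot_comp, h]

-- middle st-shape : true :: (comp W ++ true :: B), tot W = 2
lemma shape_mid2_dtouch {W B : List Bool} (hW : tot W = 2) (hB : Nonneg B) :
    dtouch (true :: (W.map (fun b => !b) ++ true :: B)) 0
      = ((utouch W 1) ++ ((dtouch B 0).map (1 + ·)).map (W.length + ·)).map (1 + ·) := by
  rw [dtouch_cons_true, dtouch_append, tot_comp' hW]
  have h1 : (0:ℤ) - 1 = -1 := by norm_num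
  have h2 : (-1:ℤ) - -2 = 1 := by norm_num
  rw [h1, h2, comp_dtouch, dtouch_cons_true]
  have h3 : (1:ℤ) - 1 = 0 := by norm_num
  have h4 : -(-1 : ℤ) = 1 := by norm_num
  rw [h3, h4, List.length_map]

lemma shape_mid2_dstart {W B : List Bool} (hW : tot W = 2) (hB : Nonneg B) :
    dstart (true :: (W.map (fun b => !b) ++ true :: B)) 0 = ustart W 1 := by
  rw [dstart_cons_true, dstart_append, tot_comp' hW]
  have h1 : (0:ℤ) - 1 = -1 := by norm_num
  have h2 : (-1:ℤ) - -2 = 1 := by norm_num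
  rw [h1, h2, comp_dstart, dstart_cons_true]
  have h3 : (1:ℤ) - 1 = 0 := by norm_num
  have h4 : -(-1 : ℤ) = 1 := by norm_num
  rw [h3, h4, nonneg_dstart_zero hB (by norm_num)]
  omega

-- middle gst-shape : true :: (comp V ++ true :: B), tot V = 0
lemma shape_mid0_utouch {V B : List Bool} (hV : tot V = 0) (hB : Nonneg B) :
    utouch (true :: (V.map (fun b => !b) ++ true :: B)) 1
      = 0 :: ((dtouch V 0 ++ [V.length]).map (1 + ·)) := by
  rw [utouch_cons_true, if_pos (by norm_num)]
  rw [utouch_append, tot_comp' hV]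
  have h1 : (1:ℤ) - 1 = 0 := by norm_num
  have h2 : (0:ℤ) - -0 = 0 := by norm_num
  rw [h1, h2, comp_utouch, utouch_cons_true, if_pos (by norm_num)]
  have h3 : (0:ℤ) - 1 = -1 := by norm_num
  have h4 : -(0:ℤ) = 0 := by norm_num
  rw [h3, h4, nonneg_utouch_nil hB (by norm_num)]
  simp [List.length_map]

lemma shape_mid0_ustart {V B : List Bool} (hV : tot V = 0) (hB : Nonneg B) :
    ustart (true :: (V.map (fun b => !b) ++ true :: B)) 1 = dstart V 0 + 1 := by
  rw [ustart_cons_true, if_neg (by norm_num)]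
  rw [ustart_append, tot_comp' hV]
  have h1 : (1:ℤ) - 1 = 0 := by norm_num
  have h2 : (0:ℤ) - -0 = 0 := by norm_num
  rw [h1, h2, comp_ustart, ustart_cons_true, if_pos rfl]
  have h3 : (0:ℤ) - 1 = -1 := by norm_num
  have h4 : -(0:ℤ) = 0 := by norm_num
  rw [h3, h4, nonneg_ustart_neg hB (by norm_num)]
  omega

-- tail shape : false :: (comp A ++ true :: Z), A nonneg, tot A = 0
lemma shape_tail_dtouch {A Z : List Bool} (hA : Nonneg A) (hA0 : tot A = 0) :
    dtouch (false :: (A.map (fun b => !b) ++ true :: Z)) 0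
      = 0 :: ((((dtouch Z 0).map (1 + ·)).map (A.length + ·)).map (1 + ·)) := by
  rw [dtouch_cons_false, if_pos (by norm_num)]
  rw [dtouch_append, tot_comp' hA0]
  have h2 : (0:ℤ) + 1 - -0 = 1 := by norm_num
  have h5 : (0:ℤ)+1 = 1 := by norm_num
  rw [h2, h5, comp_dtouch]
  have h4 : -(1:ℤ) = -1 := by norm_num
  rw [h4, nonneg_utouch_nil hA (by norm_num), dtouch_cons_true]
  have h6 : (1:ℤ) - 1 = 0 := by norm_num
  rw [h6, List.length_map, List.nil_append]
  rfl

lemma shape_tail_dstart {A Z : List Bool} (hA : Nonneg A) (hA0 : tot A = 0) :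
    dstart (false :: (A.map (fun b => !b) ++ true :: Z)) 0 = 1 + dstart Z 0 := by
  rw [dstart_cons_false, if_pos rfl]
  rw [dstart_append, tot_comp' hA0]
  have h2 : (0:ℤ) + 1 - -0 = 1 := by norm_num
  have h5 : (0:ℤ)+1 = 1 := by norm_num
  rw [h2, h5, comp_dstart]
  have h4 : -(1:ℤ) = -1 := by norm_num
  rw [h4, nonneg_ustart_neg hA (by norm_num), dstart_cons_true]
  have h6 : (1:ℤ) - 1 = 0 := by norm_num
  rw [h6]
  omega

lemma shape_tail_utouch {A Z : List Bool} (hA : Nonneg A) (hA0 : tot A = 0) :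
    utouch (false :: (A.map (fun b => !b) ++ true :: Z)) 1
      = (((utouch Z 1).map (1 + ·)).map (A.length + ·)).map (1 + ·) := by
  rw [utouch_cons_false]
  have h5 : (1:ℤ)+1 = 2 := by norm_num
  rw [h5, utouch_append, tot_comp' hA0]
  have h2 : (2:ℤ) - -0 = 2 := by norm_num
  rw [h2, comp_utouch]
  have h4 : -(2:ℤ) = -2 := by norm_num
  rw [h4, nonneg_dtouch_nil hA (by norm_num), utouch_cons_true, if_neg (by norm_num)]
  have h6 : (2:ℤ) - 1 = 1 := by norm_num
  rw [h6, List.length_map, List.nil_append, List.nil_append]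

lemma shape_tail_ustart {A Z : List Bool} (hA : Nonneg A) (hA0 : tot A = 0) :
    ustart (false :: (A.map (fun b => !b) ++ true :: Z)) 1 = ustart Z 1 := by
  rw [ustart_cons_false]
  have h5 : (1:ℤ)+1 = 2 := by norm_num
  rw [h5, ustart_append, tot_comp' hA0]
  have h2 : (2:ℤ) - -0 = 2 := by norm_num
  rw [h2, comp_ustart]
  have h4 : -(2:ℤ) = -2 := by norm_num
  rw [h4, nonneg_dstart_zero hA (by norm_num), ustart_cons_true, if_neg (by norm_num)]
  have h6 : (2:ℤ) - 1 = 1 := by norm_num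
  rw [h6]
  omega

lemma shape_tail_ustart0 {A Z : List Bool} (hA : Nonneg A) (hA0 : tot A = 0) :
    ustart (false :: (A.map (fun b => !b) ++ true :: Z)) 0 = ustart Z 0 := by
  rw [ustart_cons_false]
  have h5 : (0:ℤ)+1 = 1 := by norm_num
  rw [h5, ustart_append, tot_comp' hA0]
  have h2 : (1:ℤ) - -0 = 1 := by norm_num
  rw [h2, comp_ustart]
  have h4 : -(1:ℤ) = -1 := by norm_num
  rw [h4, nonneg_dstart_zero hA (by norm_num), ustart_cons_true, if_neg (by norm_num)]
  have h6 : (1:ℤ) - 1 = 0 := by norm_num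
  rw [h6]
  omega

-- zero shape : true :: (A ++ false :: B), A,B nonneg, tot A = 0
lemma shape_zero_dtouch {A B : List Bool} (hA : Nonneg A) (hA0 : tot A = 0) (hB : Nonneg B) :
    dtouch (true :: (A ++ false :: B)) 0
      = (([0] ++ (dtouch B 0).map (1 + ·)).map (A.length + ·)).map (1 + ·) := by
  rw [dtouch_cons_true]
  have h5 : (0:ℤ) - 1 = -1 := by norm_num
  rw [h5, dtouch_append, hA0, nonneg_dtouch_nil hA (by norm_num)]
  have h2 : (-1:ℤ) - 0 = -1 := by norm_num
  rw [h2, dtouch_cons_false, if_pos (by norm_num)]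
  have h6 : (-1:ℤ) + 1 = 0 := by norm_num
  rw [h6, List.nil_append]

lemma shape_zero_dstart {A B : List Bool} (hA : Nonneg A) (hA0 : tot A = 0) (hB : Nonneg B) :
    dstart (true :: (A ++ false :: B)) 0 = 0 := by
  rw [dstart_cons_true]
  have h5 : (0:ℤ) - 1 = -1 := by norm_num
  rw [h5, dstart_append, hA0, nonneg_dstart_zero hA (by norm_num)]
  have h2 : (-1:ℤ) - 0 = -1 := by norm_num
  rw [h2, dstart_cons_false, if_neg (by norm_num)]
  have h6 : (-1:ℤ) + 1 = 0 := by norm_num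
  rw [h6, nonneg_dstart_zero hB (by norm_num)]

-- ===== set/getD helpers =====

lemma comp_comp (l : List Bool) : (l.map (fun b => !b)).map (fun b => !b) = l := by
  rw [List.map_map]
  have : ((fun (b:Bool) => !b) ∘ fun b => !b) = id := by
    funext b; simp
  rw [this, List.map_id]

lemma set_comp (W : List Bool) (p : ℕ) (v : Bool) :
    (W.map (fun b => !b)).set p v = (W.set p (!v)).map (fun b => !b) := by
  rw [List.map_set, Bool.not_not]

lemma set_cons_succ (b : Bool) (L : List Bool) (p : ℕ) (v : Bool) :
    (b :: L).set (1 + p) v = b :: L.set p v := by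
  rw [Nat.add_comm]
  rfl

lemma set_mid {W B : List Bool} {p : ℕ} (hp : p < W.length) (v : Bool) :
    (true :: (W.map (fun b => !b) ++ true :: B)).set (1 + p) v
      = true :: ((W.set p (!v)).map (fun b => !b) ++ true :: B) := by
  rw [set_cons_succ, List.set_append_left _ _ (by simpa using hp), set_comp]

lemma set_sep (L B : List Bool) (v : Bool) :
    (true :: (L ++ true :: B)).set (1 + L.length) v = true :: (L ++ v :: B) := by
  rw [set_cons_succ, List.set_append_right _ _ (le_refl _), Nat.sub_self]
  rfl

lemma set_tail {A Z : List Bool} {p : ℕ} (hp : p < Z.length) (b0 b1 : Bool) (v : Bool) :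
    (b0 :: (A ++ b1 :: Z)).set (1 + (A.length + (1 + p))) v
      = b0 :: (A ++ b1 :: Z.set p v) := by
  rw [set_cons_succ, List.set_append_right _ _ (by omega)]
  have h1 : A.length + (1 + p) - A.length = p + 1 := by omega
  rw [h1]
  rfl

lemma getD_cons_succ (a : ℕ) (l : List ℕ) (n d : ℕ) : (a :: l).getD (n+1) d = l.getD n d := rfl

lemma utouch_len_ge (x : List Bool) (c : ℤ) : ustart x c ≤ (utouch x c).length := by
  rw [utouch_length]; omega

lemma dtouch_len_ge (x : List Bool) (c : ℤ) : dstart x c ≤ (dtouch x c).length := by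
  rw [dtouch_length]; omega

lemma getD_append_left' {l1 l2 : List ℕ} {n : ℕ} (h : n < l1.length) (d : ℕ) :
    (l1 ++ l2).getD n d = l1.getD n d := List.getD_append _ _ _ _ h

-- ===== the bundle =====

theorem bundle (d : Dk) :
    (∀ e, e < sz d → gMap (stD d e) = gstD d e)
  ∧ (∀ e, e < sz d → hMap (gstD d e) = stD d (e+1))
  ∧ (∀ e, e < sz d → h'Map (gstD d e) = stD d e)
  ∧ (∀ e, e < sz d → g'Map (stD d (e+1)) = gstD d e)
  ∧ (∀ e, e < sz d → dstart (stD d e) 0 < (dtouch (stD d e) 0).length)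
  ∧ (∀ e, e < sz d → 1 ≤ ustart (gstD d e) 1)
  ∧ (∀ e, e < sz d → 1 ≤ ustart (gstD d e) 0)
  ∧ (∀ e, e < sz d → 1 ≤ dstart (stD d (e+1)) 0) := by
  induction d with
  | nil =>
    refine ⟨?_, ?_, ?_, ?_, ?_, ?_, ?_, ?_⟩ <;> (intro e he; exact absurd he (by simp [sz]))
  | node a b iha ihb =>
    obtain ⟨ha1, ha2, ha3, ha4, ha5, ha6, ha7, ha8⟩ := iha
    obtain ⟨hb1, hb2, hb3, hb4, hb5, hb6, hb7, hb8⟩ := ihb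
    set A := toPath a with hA
    set B := toPath b with hB
    have hAn : Nonneg A := toPath_nonneg a
    have hBn : Nonneg B := toPath_nonneg b
    have hA0 : tot A = 0 := toPath_tot a
    have hB0 : tot B = 0 := toPath_tot b
    set t := sz a with ht
    have hk : sz (Dk.node a b) = t + sz b + 1 := rfl
    have hst0 : stD (Dk.node a b) 0 = true :: (A ++ false :: B) := by
      rw [stD, if_pos rfl]
    have hstM : ∀ e, 1 ≤ e → e ≤ t → stD (Dk.node a b) e
        = true :: ((gstD a (t - e)).map (fun b => !b) ++ true :: B) := by
      intro e h1 h2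
      rw [stD, if_neg (by omega), if_pos h2]
    have hstT : ∀ e, t < e → stD (Dk.node a b) e
        = false :: (A.map (fun b => !b) ++ true :: stD b (e - t - 1)) := by
      intro e h1
      rw [stD, if_neg (by omega), if_neg (by omega)]
    have hgM : ∀ e, e ≤ t → gstD (Dk.node a b) e
        = true :: ((stD a (t - e)).map (fun b => !b) ++ true :: B) := by
      intro e h1
      rw [gstD, if_pos h1]
    have hgT : ∀ e, t < e → gstD (Dk.node a b) e
        = false :: (A.map (fun b => !b) ++ true :: gstD b (e - t - 1)) := by
      intro e h1
      rw [gstD, if_neg (by omega)]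
    have htotg : ∀ s, s < t → tot (gstD a s) = 2 := fun s hs => (stD_tot a s).2 hs
    have htots : ∀ s, s ≤ t → tot (stD a s) = 0 := fun s hs => (stD_tot a s).1 hs
    have htotgb : ∀ j, j < sz b → tot (gstD b j) = 2 := fun j hj => (stD_tot b j).2 hj
    have htotsb : ∀ j, j ≤ sz b → tot (stD b j) = 0 := fun j hj => (stD_tot b j).1 hj
    refine ⟨?_, ?_, ?_, ?_, ?_, ?_, ?_, ?_⟩
    · -- (1) gMap
      intro e he
      rcases Nat.eq_zero_or_pos e with he0 | hepos
      · subst he0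
        have hW : (stD a (t - 0)).map (fun b => !b) = A := by
          rw [Nat.sub_zero, ht, stD_last, comp_comp]
        have hd := shape_zero_dtouch hAn hA0 hBn
        have hds := shape_zero_dstart hAn hA0 hBn
        have hgi : gIdx (stD (Dk.node a b) 0) = 1 + A.length := by
          unfold gIdx
          rw [hst0, hd, hds, getD_map_add _ (by simp), getD_map_add _ (by simp),
            getD_append_left' (by simp) 0]
          rfl
        unfold gMap
        rw [hgi, hst0, hgM 0 (by omega), hW, set_cons_succ,
          List.set_append_right _ _ (le_refl _), Nat.sub_self]
        rfl
      · rcases le_or_gt e t with hele | hte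
        · have hsa : t - e < sz a := by omega
          have hX := hstM e hepos hele
          have hWt : tot (gstD a (t - e)) = 2 := htotg _ hsa
          have hd := shape_mid2_dtouch (B := B) hWt hBn
          have hds := shape_mid2_dstart (B := B) hWt hBn
          have hrange : ustart (gstD a (t - e)) 1 < (utouch (gstD a (t - e)) 1).length := by
            rw [utouch_length]
            have h7 := ha7 (t - e) hsa
            have he0 : ustart (gstD a (t - e)) ((1:ℤ)-1) = ustart (gstD a (t - e)) 0 := by norm_num
            omega
          have hgi : gIdx (stD (Dk.node a b) e) = 1 + h'Idx (gstD a (t - e)) := by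
            unfold gIdx
            rw [hX, hd, hds, getD_map_add _ (by rw [List.length_append]; omega),
              getD_append_left' hrange]
            rfl
          have hplt : h'Idx (gstD a (t - e)) < (gstD a (t - e)).length :=
            mem_utouch_lt (getD_mem hrange)
          unfold gMap
          rw [hgi, hX, set_mid hplt true]
          have hset : (gstD a (t - e)).set (h'Idx (gstD a (t - e))) (!true) = h'Map (gstD a (t - e)) := rfl
          rw [hset, ha3 _ hsa, hgM e hele]
        · have hjlt : e - t - 1 < sz b := by rw [hk] at he; omega
          have hX := hstT e hte
          have hbI1 := hb5 _ hjlt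
          have hgi : gIdx (stD (Dk.node a b) e)
              = 1 + (A.length + (1 + gIdx (stD b (e - t - 1)))) := by
            unfold gIdx
            rw [hX, shape_tail_dtouch hAn hA0, shape_tail_dstart hAn hA0,
              Nat.add_comm 1 (dstart (stD b (e - t - 1)) 0), getD_cons_succ,
              getD_map_add _ (by simpa using hbI1), getD_map_add _ (by simpa using hbI1),
              getD_map_add _ hbI1]
          have hzlt : gIdx (stD b (e - t - 1)) < (stD b (e - t - 1)).length :=
            mem_dtouch_lt (getD_mem hbI1)
          unfold gMap
          rw [hgi, hX,
            show A.length = (A.map (fun b => !b)).length from (List.length_map _).symm,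
            set_tail hzlt false true true]
          have hset : (stD b (e - t - 1)).set (gIdx (stD b (e - t - 1))) true
              = gMap (stD b (e - t - 1)) := rfl
          rw [hset, hb1 _ hjlt, hgT e hte]
    · -- (2) hMap
      intro e he
      rcases le_or_gt e t with hele | hte
      · have hsa : t - e ≤ sz a := by omega
        have hVt : tot (stD a (t - e)) = 0 := htots _ hsa
        have hY := hgM e hele
        have hut := shape_mid0_utouch (B := B) hVt hBn
        have hus := shape_mid0_ustart (B := B) hVt hBn
        by_cases het : e = t
        · have hV0 : stD a (t - e) = A := by rw [het, Nat.sub_self, stD_zero]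
          have hidx : hIdx (gstD (Dk.node a b) e) = 0 := by
            unfold hIdx
            rw [hY, hut, hus, hV0, nonneg_dstart_zero hAn (le_refl 0)]
            rfl
          unfold hMap
          rw [hidx, hY, hV0, hstT (e+1) (by omega),
            show e + 1 - t - 1 = 0 from by omega, stD_zero, ← hB]
          rfl
        · have hslt : t - e - 1 < sz a := by omega
          have hds1 : 1 ≤ dstart (stD a (t-e)) 0 := by
            have h8 := ha8 (t - e - 1) hslt
            rw [show t - e - 1 + 1 = t - e from by omega] at h8
            exact h8
          have hbd : dstart (stD a (t-e)) 0 - 1 < (dtouch (stD a (t-e)) 0).length := by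
            have := dtouch_len_ge (stD a (t-e)) 0
            omega
          have hidx : hIdx (gstD (Dk.node a b) e) = 1 + g'Idx (stD a (t-e)) := by
            unfold hIdx
            rw [hY, hut, hus,
              show dstart (stD a (t-e)) 0 + 1 - 1 = (dstart (stD a (t-e)) 0 - 1) + 1 from by omega,
              getD_cons_succ, getD_map_add _ (by rw [List.length_append]; omega),
              getD_append_left' hbd]
            rfl
          have hglt : g'Idx (stD a (t-e)) < (stD a (t-e)).length :=
            mem_dtouch_lt (getD_mem hbd)
          unfold hMap
          rw [hidx, hY, set_mid hglt false]
          have hset : (stD a (t-e)).set (g'Idx (stD a (t-e))) (!false) = g'Map (stD a (t-e)) := rfl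
          rw [hset, show t - e = (t - e - 1) + 1 from by omega, ha4 _ hslt,
            hstM (e+1) (by omega) (by omega), show t - (e+1) = t - e - 1 from by omega]
      · have hjlt : e - t - 1 < sz b := by rw [hk] at he; omega
        have hY := hgT e hte
        have h6 := hb6 _ hjlt
        have hbd : ustart (gstD b (e-t-1)) 1 - 1 < (utouch (gstD b (e-t-1)) 1).length := by
          have := utouch_len_ge (gstD b (e-t-1)) 1
          omega
        have hidx : hIdx (gstD (Dk.node a b) e)
            = 1 + (A.length + (1 + hIdx (gstD b (e-t-1)))) := by
          unfold hIdx
          rw [hY, shape_tail_utouch hAn hA0, shape_tail_ustart hAn hA0,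
            getD_map_add _ (by simpa using hbd), getD_map_add _ (by simpa using hbd),
            getD_map_add _ hbd]
        have hwlt : hIdx (gstD b (e-t-1)) < (gstD b (e-t-1)).length :=
          mem_utouch_lt (getD_mem hbd)
        unfold hMap
        rw [hidx, hY,
          show A.length = (A.map (fun b => !b)).length from (List.length_map _).symm,
          set_tail hwlt false true false]
        have hset : (gstD b (e-t-1)).set (hIdx (gstD b (e-t-1))) false = hMap (gstD b (e-t-1)) := rfl
        rw [hset, hb2 _ hjlt, hstT (e+1) (by omega),
          show e + 1 - t - 1 = (e - t - 1) + 1 from by omega]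
    · -- (3) h'Map
      intro e he
      rcases le_or_gt e t with hele | hte
      · have hsa : t - e ≤ sz a := by omega
        have hVt : tot (stD a (t - e)) = 0 := htots _ hsa
        have hY := hgM e hele
        have hut := shape_mid0_utouch (B := B) hVt hBn
        have hus := shape_mid0_ustart (B := B) hVt hBn
        rcases Nat.eq_zero_or_pos e with he0 | hepos
        · subst he0
          have hVA : stD a (t - 0) = A.map (fun b => !b) := by
            rw [Nat.sub_zero, ht, stD_last]
          have hds : dstart (stD a (t - 0)) 0 = ustart A 0 := by
            rw [hVA, comp_dstart, neg_zero]
          have hlen : (dtouch (stD a (t - 0)) 0).length = ustart A 0 := by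
            rw [hVA, comp_dtouch, neg_zero, utouch_length,
              show (0:ℤ) - 1 = -1 from by norm_num,
              nonneg_ustart_neg hAn (c := -1) (by norm_num)]
            omega
          have hidx : h'Idx (gstD (Dk.node a b) 0)
              = 1 + ((stD a (t - 0)).map (fun b => !b)).length := by
            unfold h'Idx
            rw [hY, hut, hus, getD_cons_succ,
              getD_map_add _ (by rw [List.length_append, hlen, hds]; simp),
              List.getD_append_right _ _ _ _ (by rw [hlen, hds]),
              hlen, hds, Nat.sub_self, List.length_map]
            rfl
          unfold h'Map
          rw [hidx, hY, set_sep, hst0, Nat.sub_zero, ht, stD_last, comp_comp]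
        · have hsa' : t - e < sz a := by omega
          have hbd := ha5 _ hsa'
          have hidx : h'Idx (gstD (Dk.node a b) e) = 1 + gIdx (stD a (t-e)) := by
            unfold h'Idx
            rw [hY, hut, hus, getD_cons_succ,
              getD_map_add _ (by rw [List.length_append]; omega),
              getD_append_left' hbd]
            rfl
          have hplt : gIdx (stD a (t-e)) < (stD a (t-e)).length :=
            mem_dtouch_lt (getD_mem hbd)
          unfold h'Map
          rw [hidx, hY, set_mid hplt false]
          have hset : (stD a (t-e)).set (gIdx (stD a (t-e))) (!false) = gMap (stD a (t-e)) := rfl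
          rw [hset, ha1 _ hsa', hstM e hepos hele]
      · have hjlt : e - t - 1 < sz b := by rw [hk] at he; omega
        have hY := hgT e hte
        have h7 := hb7 _ hjlt
        have hbd : ustart (gstD b (e-t-1)) 1 < (utouch (gstD b (e-t-1)) 1).length := by
          rw [utouch_length]
          have he0 : ustart (gstD b (e-t-1)) ((1:ℤ)-1) = ustart (gstD b (e-t-1)) 0 := by norm_num
          omega
        have hidx : h'Idx (gstD (Dk.node a b) e)
            = 1 + (A.length + (1 + h'Idx (gstD b (e-t-1)))) := by
          unfold h'Idx
          rw [hY, shape_tail_utouch hAn hA0, shape_tail_ustart hAn hA0,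
            getD_map_add _ (by simpa using hbd), getD_map_add _ (by simpa using hbd),
            getD_map_add _ hbd]
        have hwlt : h'Idx (gstD b (e-t-1)) < (gstD b (e-t-1)).length :=
          mem_utouch_lt (getD_mem hbd)
        unfold h'Map
        rw [hidx, hY,
          show A.length = (A.map (fun b => !b)).length from (List.length_map _).symm,
          set_tail hwlt false true false]
        have hset : (gstD b (e-t-1)).set (h'Idx (gstD b (e-t-1))) false = h'Map (gstD b (e-t-1)) := rfl
        rw [hset, hb3 _ hjlt, hstT e hte]
    · -- (4) g'Map
      intro e he
      rcases le_or_gt (e+1) t with hele | hte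
      · have hsa : t - (e+1) < sz a := by omega
        have hWt : tot (gstD a (t - (e+1))) = 2 := htotg _ hsa
        have hX := hstM (e+1) (by omega) hele
        have h6 := ha6 _ hsa
        have hbd : ustart (gstD a (t-(e+1))) 1 - 1 < (utouch (gstD a (t-(e+1))) 1).length := by
          have := utouch_len_ge (gstD a (t-(e+1))) 1
          omega
        have hidx : g'Idx (stD (Dk.node a b) (e+1)) = 1 + hIdx (gstD a (t-(e+1))) := by
          unfold g'Idx
          rw [hX, shape_mid2_dtouch hWt hBn, shape_mid2_dstart hWt hBn,
            getD_map_add _ (by rw [List.length_append]; omega),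
            getD_append_left' hbd]
          rfl
        have hplt : hIdx (gstD a (t-(e+1))) < (gstD a (t-(e+1))).length :=
          mem_utouch_lt (getD_mem hbd)
        unfold g'Map
        rw [hidx, hX, set_mid hplt true]
        have hset : (gstD a (t-(e+1))).set (hIdx (gstD a (t-(e+1)))) (!true) = hMap (gstD a (t-(e+1))) := rfl
        rw [hset, ha2 _ hsa, hgM e (by omega),
          show t - (e+1) + 1 = t - e from by omega]
      · have hX := hstT (e+1) hte
        by_cases het : e = t
        · have hZ0 : stD b (e + 1 - t - 1) = B := by
            rw [show e + 1 - t - 1 = 0 from by omega, stD_zero]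
          have hidx : g'Idx (stD (Dk.node a b) (e+1)) = 0 := by
            unfold g'Idx
            rw [hX, shape_tail_dtouch hAn hA0, shape_tail_dstart hAn hA0, hZ0,
              nonneg_dstart_zero hBn (le_refl 0)]
            rfl
          unfold g'Map
          rw [hidx, hX, hZ0, hgM e (by omega), show t - e = 0 from by omega, stD_zero, ← hA]
          rfl
        · have hj'lt : e - t - 1 < sz b := by rw [hk] at he; omega
          rw [show e + 1 - t - 1 = e - t from by omega] at hX
          have hds1 : 1 ≤ dstart (stD b (e-t)) 0 := by
            have h8 := hb8 (e - t - 1) hj'lt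
            rw [show e - t - 1 + 1 = e - t from by omega] at h8
            exact h8
          have hbd : dstart (stD b (e-t)) 0 - 1 < (dtouch (stD b (e-t)) 0).length := by
            have := dtouch_len_ge (stD b (e-t)) 0
            omega
          have hidx : g'Idx (stD (Dk.node a b) (e+1))
              = 1 + (A.length + (1 + g'Idx (stD b (e-t)))) := by
            unfold g'Idx
            rw [hX, shape_tail_dtouch hAn hA0, shape_tail_dstart hAn hA0,
              show 1 + dstart (stD b (e-t)) 0 - 1 = (dstart (stD b (e-t)) 0 - 1) + 1 from by omega,
              getD_cons_succ, getD_map_add _ (by simpa using hbd),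
              getD_map_add _ (by simpa using hbd), getD_map_add _ hbd]
          have hplt : g'Idx (stD b (e-t)) < (stD b (e-t)).length :=
            mem_dtouch_lt (getD_mem hbd)
          unfold g'Map
          rw [hidx, hX,
            show A.length = (A.map (fun b => !b)).length from (List.length_map _).symm,
            set_tail hplt false true true]
          have hset : (stD b (e-t)).set (g'Idx (stD b (e-t))) true = g'Map (stD b (e-t)) := rfl
          rw [hset, show e - t = (e - t - 1) + 1 from by omega, hb4 _ hj'lt, hgT e (by omega)]
    · -- (5) I1
      intro e he
      rcases Nat.eq_zero_or_pos e with he0 | hepos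
      · subst he0
        rw [hst0, shape_zero_dtouch hAn hA0 hBn, shape_zero_dstart hAn hA0 hBn]
        simp
      · rcases le_or_gt e t with hele | hte
        · have hsa : t - e < sz a := by omega
          have hWt : tot (gstD a (t - e)) = 2 := htotg _ hsa
          rw [hstM e hepos hele, shape_mid2_dtouch hWt hBn, shape_mid2_dstart hWt hBn,
            List.length_map, List.length_append, utouch_length]
          have h7 := ha7 (t - e) hsa
          have he0 : ustart (gstD a (t - e)) ((1:ℤ)-1) = ustart (gstD a (t - e)) 0 := by norm_num
          omega
        · have hjlt : e - t - 1 < sz b := by rw [hk] at he; omega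
          have hbI1 := hb5 _ hjlt
          rw [hstT e hte, shape_tail_dtouch hAn hA0, shape_tail_dstart hAn hA0]
          simp only [List.length_cons, List.length_map]
          omega
    · -- (6) I2
      intro e he
      rcases le_or_gt e t with hele | hte
      · have hsa : t - e ≤ sz a := by omega
        have hVt : tot (stD a (t - e)) = 0 := htots _ hsa
        rw [hgM e hele, shape_mid0_ustart hVt hBn]
        omega
      · have hjlt : e - t - 1 < sz b := by rw [hk] at he; omega
        rw [hgT e hte, shape_tail_ustart hAn hA0]
        exact hb6 _ hjlt
    · -- (7) I3
      intro e he
      rcases le_or_gt e t with hele | hte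
      · rw [hgM e hele, ustart_cons_true, if_pos rfl]
        omega
      · have hjlt : e - t - 1 < sz b := by rw [hk] at he; omega
        rw [hgT e hte, shape_tail_ustart0 hAn hA0]
        exact hb7 _ hjlt
    · -- (8) I4
      intro e he
      rcases le_or_gt (e+1) t with hele | hte
      · have hsa : t - (e+1) < sz a := by omega
        have hWt : tot (gstD a (t - (e+1))) = 2 := htotg _ hsa
        rw [hstM (e+1) (by omega) hele, shape_mid2_dstart hWt hBn]
        exact ha6 _ hsa
      · rw [hstT (e+1) hte, shape_tail_dstart hAn hA0]
        omega

-- ===== iteration =====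

lemma iterate_stD (d : Dk) : ∀ e, e ≤ sz d → fMap^[e] (toPath d) = stD d e := by
  intro e
  induction e with
  | zero => intro _; rw [Function.iterate_zero_apply, stD_zero]
  | succ e ihe =>
    intro he
    rw [Function.iterate_succ_apply', ihe (by omega)]
    show hMap (gMap (stD d e)) = stD d (e+1)
    rw [(bundle d).1 e (by omega), (bundle d).2.1 e (by omega)]

-- ===== from DyckSet to Dk =====

lemma tot_count (x : List Bool) : tot x = 2 * (x.count true : ℤ) - (x.length : ℤ) := by
  induction x with
  | nil => simp [tot]
  | cons b l ih =>
    cases b <;> simp [tot_cons, ih, stepVal, List.count_cons] <;> push_cast <;> ring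

lemma flaws_zero_nonneg {x : List Bool} (h : flaws x = 0) : Nonneg x := by
  have hno : ∀ i, i < x.length → x.getD i true = false → ¬ (pathHeight x i ≤ 0) := by
    intro i hi hgd hle
    have hmem : i ∈ (List.range x.length).filter
        (fun i => isD x i && decide (pathHeight x i ≤ 0)) := by
      rw [List.mem_filter, List.mem_range]
      refine ⟨hi, ?_⟩
      simp only [isD]
      rw [hgd]
      simp [hle]
    have hnil : (List.range x.length).filter
        (fun i => isD x i && decide (pathHeight x i ≤ 0)) = [] :=
      List.length_eq_zero_iff.mp h
    rw [hnil] at hmem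
    exact absurd hmem List.not_mem_nil
  intro i
  induction i with
  | zero => simp [pathHeight_zero]
  | succ i ihi =>
    rcases lt_or_ge i x.length with hi | hi
    · rw [pathHeight_succ x hi]
      cases hgd : x.getD i true
      · have hpos := hno i hi hgd
        simp only [stepVal, Bool.false_eq_true, if_false]
        omega
      · have hst : stepVal true = 1 := rfl
        rw [hst]
        omega
    · rw [pathHeight_of_le x (by omega), ← pathHeight_of_le x hi]
      exact ihi

lemma pathHeight_take (l : List Bool) (p i : ℕ) :
    pathHeight (l.take p) i = pathHeight l (min i p) := by
  rw [pathHeight_eq, pathHeight_eq, List.take_take]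

lemma tot_take_drop (l : List Bool) (m : ℕ) :
    tot l = pathHeight l m + tot (l.drop m) := by
  conv_lhs => rw [← List.take_append_drop m l]
  rw [tot_append, pathHeight_eq]

lemma pathHeight_drop (l : List Bool) (m i : ℕ) :
    pathHeight (l.drop m) i = pathHeight l (m + i) - pathHeight l m := by
  have h1 : (l.drop m).take i = (l.take (m+i)).drop m := by
    rw [List.drop_take]
    congr 1
    omega
  rw [pathHeight_eq, h1]
  have h2 := tot_take_drop (l.take (m+i)) m
  rw [pathHeight_take, min_eq_left (by omega)] at h2
  have h3 : tot (l.take (m+i)) = pathHeight l (m+i) := rfl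
  omega

lemma exists_dk : ∀ (n : ℕ) (x : List Bool), x.length = n → Nonneg x → tot x = 0 →
    ∃ d : Dk, toPath d = x := by
  intro n
  induction n using Nat.strong_induction_on with
  | _ n ih =>
    intro x hlen hnn h0
    cases x with
    | nil => exact ⟨Dk.nil, rfl⟩
    | cons b r =>
      have hb : b = true := by
        cases b
        · exfalso
          have h1 := hnn 1
          rw [show (1:ℕ) = 0 + 1 from rfl, pathHeight_cons] at h1
          simp [stepVal, pathHeight_zero] at h1
        · rfl
      subst hb
      have hex : ∃ j, j < (true :: r).length ∧ pathHeight (true :: r) (j+1) = 0 := by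
        refine ⟨(true :: r).length - 1, by simp, ?_⟩
        rw [show (true :: r).length - 1 + 1 = (true :: r).length from by simp,
          pathHeight_of_le _ (le_refl _), h0]
      obtain ⟨hn0lt, hn0h⟩ := Nat.find_spec hex
      set n0 := Nat.find hex with hn0
      have hmin : ∀ j, j < n0 → ¬(j < (true :: r).length ∧ pathHeight (true :: r) (j+1) = 0) :=
        fun j hj => Nat.find_min hex hj
      have hn0pos : 1 ≤ n0 := by
        rcases Nat.eq_zero_or_pos n0 with h00 | h
        · exfalso
          rw [h00, show (0:ℕ)+1 = 0+1 from rfl, pathHeight_cons] at hn0h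
          simp [stepVal, pathHeight_zero] at hn0h
        · exact h
      have hstep := pathHeight_succ (true :: r) hn0lt
      have hHge : 0 ≤ pathHeight (true :: r) n0 := hnn n0
      have hHne : pathHeight (true :: r) n0 ≠ 0 := by
        intro hcon
        exact (hmin (n0 - 1) (by omega))
          ⟨by omega, by rw [show n0 - 1 + 1 = n0 from by omega]; exact hcon⟩
      have hgd : (true :: r).getD n0 true = false := by
        cases hgd : (true :: r).getD n0 true
        · rfl
        · exfalso
          rw [hgd, hn0h] at hstep
          simp [stepVal] at hstep
          omega
      have hH1 : pathHeight (true :: r) n0 = 1 := by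
        rw [hgd, hn0h] at hstep
        simp [stepVal] at hstep
        omega
      set p := n0 - 1 with hp
      have hplt : p < r.length := by
        simp only [List.length_cons] at hn0lt
        omega
      have hrp : r[p] = false := by
        have : (true :: r).getD n0 true = r.getD p true := by
          rw [show n0 = p + 1 from by omega]
          rfl
        rw [this, List.getD_eq_getElem _ _ hplt] at hgd
        exact hgd
      have hrsplit : r = r.take p ++ false :: r.drop (p+1) := by
        conv_lhs => rw [← List.take_append_drop p r]
        rw [List.drop_eq_getElem_cons hplt, hrp]
      -- height facts about r
      have hhr : ∀ j, pathHeight (true :: r) (j+1) = 1 + pathHeight r j := by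
        intro j
        rw [pathHeight_cons]
        simp [stepVal]
      have hrph : pathHeight r p = 0 := by
        have := hhr p
        rw [show p + 1 = n0 from by omega, hH1] at this
        omega
      have hrp1h : pathHeight r (p+1) = -1 := by
        have := hhr (p+1)
        rw [show p + 1 + 1 = n0 + 1 from by omega, hn0h] at this
        omega
      have htotr : tot r = -1 := by
        rw [tot_cons] at h0
        simp [stepVal] at h0
        omega
      -- the pieces
      have hAnn : Nonneg (r.take p) := by
        intro i
        rw [pathHeight_take]
        rcases le_or_gt p i with hip | hip
        · rw [min_eq_right hip, hrph]
        · rw [min_eq_left (le_of_lt hip)]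
          have hge : 0 ≤ pathHeight (true :: r) (i+1) := hnn (i+1)
          have hne : pathHeight (true :: r) (i+1) ≠ 0 := by
            intro hcon
            exact (hmin i (by omega)) ⟨by simp; omega, hcon⟩
          have := hhr i
          omega
      have hA0 : tot (r.take p) = 0 := by
        have : tot (r.take p) = pathHeight r p := rfl
        rw [this, hrph]
      have hBnn : Nonneg (r.drop (p+1)) := by
        intro i
        rw [pathHeight_drop, hrp1h]
        have h1 := hnn (p+1+i+1)
        have := hhr (p+1+i)
        omega
      have hB0 : tot (r.drop (p+1)) = 0 := by
        have := tot_take_drop r (p+1)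
        rw [htotr, hrp1h] at this
        omega
      obtain ⟨dA, hdA⟩ := ih (r.take p).length (by
          rw [List.length_take]
          simp only [List.length_cons] at hlen
          omega) (r.take p) rfl hAnn hA0
      obtain ⟨dB, hdB⟩ := ih (r.drop (p+1)).length (by
          rw [List.length_drop]
          simp only [List.length_cons] at hlen
          omega) (r.drop (p+1)) rfl hBnn hB0
      refine ⟨Dk.node dA dB, ?_⟩
      rw [toPath, hdA, hdB, ← hrsplit]

end CF


theorem fk_is_mirror (k : ℕ) (x : List Bool) (hx : x ∈ DyckSet k 0) :
    fMap^[k] x = x.map (fun b => !b) := by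
  obtain ⟨hlen, hcnt, hfl⟩ := hx
  have hnn : CF.Nonneg x := CF.flaws_zero_nonneg hfl
  have h0 : CF.tot x = 0 := by
    rw [CF.tot_count, hcnt, hlen]
    push_cast
    ring
  obtain ⟨d, hd⟩ := CF.exists_dk x.length x rfl hnn h0
  have hszd : CF.sz d = k := by
    have hl := CF.toPath_length d
    rw [hd, hlen] at hl
    omega
  rw [← hd, ← hszd, CF.iterate_stD d (CF.sz d) le_rfl, CF.stD_last]
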